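/- Let k ≥ 1 be an integer and x, s real numbers. Then for every natural number n, F_{n+1}^{(k)}(x, s) = ∑_{j=0}^{⌊n/k⌋} C(n − (k−1)j, j) · s^j · x^{n−kj}. -/

import Mathlib

/-- The generalized Fibonacci polynomials `F_n^{(k)}(x, s)`:
`F_0 = 0`, `F_n = x^(n-1)` for `0 < n < k`, and `F_n = x·F_{n-1} + s·F_{n-k}` for `n ≥ k`
(for `n = k` the recurrence gives `F_k = x^(k-1)`, so we may use `x^(n-1)` for all `0 < n ≤ k`;
this also gives the correct value `F_1 = 1` in the degenerate case `k = 1`). -/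
noncomputable def Fk (k : ℕ) (x s : ℝ) : ℕ → ℝ
  | n =>
    if n = 0 then 0
    else if n ≤ k then x ^ (n - 1)
    else if k = 0 then 0
    else x * Fk k x s (n - 1) + s * Fk k x s (n - k)
  termination_by n => n
  decreasing_by all_goals omega



lemma muldist (k j : ℕ) (hk : 1 ≤ k) : (k - 1) * j + j = k * j := by
  have h : k - 1 + 1 = k := by omega
  calc (k-1)*j + j = ((k-1)+1)*j := by ring
    _ = k * j := by rw [h]

lemma key (k : ℕ) (hk : 1 ≤ k) (x s : ℝ) (n : ℕ) (hn : k ≤ n) :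
    (∑ j ∈ Finset.range (n / k + 1),
        ((n - (k - 1) * j).choose j : ℝ) * s ^ j * x ^ (n - k * j))
    = x * (∑ j ∈ Finset.range ((n - 1) / k + 1),
        ((n - 1 - (k - 1) * j).choose j : ℝ) * s ^ j * x ^ (n - 1 - k * j))
    + s * (∑ j ∈ Finset.range ((n - k) / k + 1),
        ((n - k - (k - 1) * j).choose j : ℝ) * s ^ j * x ^ (n - k - k * j)) := by
  set M := n / k with hM
  have hM1 : (n - k) / k + 1 = M := by
    have h := Nat.sub_mul_div n k 1
    have hMpos : 1 ≤ M := (Nat.one_le_div_iff (by omega)).2 hn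
    simp only [mul_one] at h
    omega
  have hMle : k * M ≤ n := Nat.mul_div_le n k
  -- extend the x-sum to range (M+1)
  have hsub : Finset.range ((n - 1) / k + 1) ⊆ Finset.range (M + 1) := by
    apply Finset.range_subset_range.2
    have : (n - 1) / k ≤ n / k := Nat.div_le_div_right (by omega)
    omega
  have hx : (∑ j ∈ Finset.range ((n - 1) / k + 1),
        ((n - 1 - (k - 1) * j).choose j : ℝ) * s ^ j * x ^ (n - 1 - k * j))
      = ∑ j ∈ Finset.range (M + 1),
        ((n - 1 - (k - 1) * j).choose j : ℝ) * s ^ j * x ^ (n - 1 - k * j) := by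
    apply Finset.sum_subset hsub
    intro j hj hj'
    simp only [Finset.mem_range] at hj hj'
    have hj1 : 1 ≤ j := le_trans (Nat.le_add_left 1 _) (not_lt.1 hj')
    have h1 : n - 1 < k * j := by
      have h := (Nat.div_lt_iff_lt_mul (show 0 < k by omega)).1 (show (n-1)/k < j by omega)
      have h' : j * k = k * j := Nat.mul_comm j k
      exact h' ▸ h
    have h2 : k * j ≤ n := by
      have h := (Nat.le_div_iff_mul_le (show 0 < k by omega)).1 (show j ≤ M from Nat.lt_succ_iff.1 hj)
      have h' : j * k = k * j := Nat.mul_comm j k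
      exact h' ▸ h
    have h3 := muldist k j hk
    have hlt : n - 1 - (k - 1) * j < j := by clear hj hj' hM1 hM hsub hMle; omega
    rw [Nat.choose_eq_zero_of_lt hlt]
    simp
  rw [hx, hM1, Finset.mul_sum, Finset.mul_sum,
    Finset.sum_range_succ' _ M,
    Finset.sum_range_succ'
      (fun j => x * (((n - 1 - (k - 1) * j).choose j : ℝ) * s ^ j * x ^ (n - 1 - k * j))) M]
  have hterm : ∀ j < M,
      ((n - (k - 1) * (j + 1)).choose (j + 1) : ℝ) * s ^ (j + 1) * x ^ (n - k * (j + 1))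
      = x * (((n - 1 - (k - 1) * (j + 1)).choose (j + 1) : ℝ) * s ^ (j + 1) * x ^ (n - 1 - k * (j + 1)))
        + s * (((n - k - (k - 1) * j).choose j : ℝ) * s ^ j * x ^ (n - k - k * j)) := by
    intro j hjM
    have hA : k * (j + 1) ≤ n := by
      have h := (Nat.le_div_iff_mul_le (show 0 < k by omega)).1 (show j + 1 ≤ M by omega)
      have h' : (j+1) * k = k * (j+1) := Nat.mul_comm _ _
      exact h' ▸ h
    have h2 : k * (j + 1) = (k - 1) * (j + 1) + (j + 1) := (muldist k (j+1) hk).symm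
    have h3 : (k - 1) * (j + 1) = (k - 1) * j + (k - 1) := by ring
    have h4 : k * (j + 1) = k * j + k := by ring
    clear hjM hM hM1 hsub hx hMle
    by_cases hB : k * (j + 1) = n
    · -- boundary case: k ∣ n, top coefficient
      have e1 : n - (k - 1) * (j + 1) = j + 1 := by omega
      have e2 : n - 1 - (k - 1) * (j + 1) = j := by omega
      have e3 : n - k - (k - 1) * j = j := by omega
      have e4 : n - k * (j + 1) = 0 := by omega
      have e5 : n - k - k * j = 0 := by omega
      rw [e1, e2, e3, e4, e5, Nat.choose_self, Nat.choose_succ_self, Nat.choose_self]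
      push_cast
      ring
    · have hAlt : k * (j + 1) ≤ n - 1 := by omega
      have e1 : n - (k - 1) * (j + 1) = (n - 1 - (k - 1) * (j + 1)) + 1 := by omega
      have e3 : n - k - (k - 1) * j = n - 1 - (k - 1) * (j + 1) := by omega
      have e4 : n - k * (j + 1) = (n - 1 - k * (j + 1)) + 1 := by omega
      have e5 : n - k - k * j = n - k * (j + 1) := by omega
      rw [e1, e3, e4, e5, e4, Nat.choose_succ_succ]
      push_cast
      ring
  rw [Finset.sum_congr rfl (fun j hj => hterm j (Finset.mem_range.1 hj))]
  have h0 : ((n - (k - 1) * 0).choose 0 : ℝ) * s ^ 0 * x ^ (n - k * 0)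
      = x * (((n - 1 - (k - 1) * 0).choose 0 : ℝ) * s ^ 0 * x ^ (n - 1 - k * 0)) := by
    simp only [Nat.mul_zero, Nat.sub_zero, Nat.choose_zero_right]
    have : n - 1 + 1 = n := by omega
    rw [← this]
    push_cast
    ring
  rw [h0, Finset.sum_add_distrib]
  ring

theorem stmt9 (k : ℕ) (hk : 1 ≤ k) (x s : ℝ) (n : ℕ) :
    Fk k x s (n + 1)
      = ∑ j ∈ Finset.range (n / k + 1),
          ((n - (k - 1) * j).choose j : ℝ) * s ^ j * x ^ (n - k * j) := by
  induction n using Nat.strong_induction_on with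
  | _ n ih =>
    by_cases h : n < k
    · rw [Fk]
      rw [if_neg (by omega), if_pos (by omega)]
      rw [Nat.div_eq_of_lt h, Finset.sum_range_one]
      simp
    · push_neg at h
      rw [Fk]
      rw [if_neg (by omega), if_neg (by omega), if_neg (by omega)]
      have e1 : n + 1 - 1 = (n - 1) + 1 := by omega
      have e2 : n + 1 - k = (n - k) + 1 := by omega
      rw [e1, e2, ih (n - 1) (by omega), ih (n - k) (by omega)]
      exact (key k hk x s n h).symm
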